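/- arXiv:2007.10483 — 2 statements merged into one kernel-verified Lean document; each statement's English description precedes it below -/
import Mathlib

section
/- Let {E_x}_{x=1}^{4} be a semi-SIC POVM with parameter b on ℂ², let a₋ = (1 − √(1 − 12b))/2, and let k denote the number of indices x with Tr[E_x] = a₋. Then either k = 2 or b = 1/12; in the latter case a₊ = a₋ = 1/2, i.e., Tr[E_x] = 1/2 for all x (the POVM is a SIC POVM). -/
open Matrix
open scoped ComplexOrder

noncomputable section

/-- A semi-SIC POVM with parameter `b` on `ℂ^d`: a family of `d²` positive semidefinite
rank-one matrices summing to the identity, spanning the real vector space of Hermitian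
matrices, and with constant pairwise Hilbert-Schmidt inner product `b`. -/
def IsSemiSIC (d : ℕ) (b : ℝ) (E : Fin (d ^ 2) → Matrix (Fin d) (Fin d) ℂ) : Prop :=
  (∀ x, (E x).PosSemidef) ∧
  (∀ x, (E x).rank = 1) ∧
  (∑ x, E x = 1) ∧
  (∀ A : Matrix (Fin d) (Fin d) ℂ, A.IsHermitian → A ∈ Submodule.span ℝ (Set.range E)) ∧
  (∀ x y, x ≠ y → (E x * E y).trace = (b : ℂ))

lemma trace_sq_of_rank_one (A : Matrix (Fin 2) (Fin 2) ℂ) (h : A.rank = 1) :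
    (A * A).trace = A.trace ^ 2 := by
  have hdet : A.det = 0 := by
    by_contra hd
    have hu : IsUnit A := (Matrix.isUnit_iff_isUnit_det A).mpr (Ne.isUnit hd)
    have := Matrix.rank_of_isUnit A hu
    rw [h] at this
    simp at this
  have h2 : (A * A).trace = A.trace ^ 2 - 2 * A.det := by
    simp [Matrix.trace, Matrix.mul_apply, Matrix.det_fin_two, Fin.sum_univ_two, Matrix.diag]
    ring
  rw [h2, hdet]; ring

theorem dim_two_k_eq_two_or_SIC (b : ℝ)
    (E : Fin (2 ^ 2) → Matrix (Fin 2) (Fin 2) ℂ) (hE : IsSemiSIC 2 b E)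
    (aM : ℝ) (haM : aM = (1 - Real.sqrt (1 - 12 * b)) / 2)
    (k : ℕ)
    (hk : k = (Finset.univ.filter fun x => (E x).trace = (aM : ℂ)).card) :
    k = 2 ∨ (b = 1 / 12 ∧
      (1 + Real.sqrt (1 - 12 * b)) / 2 = (1 / 2 : ℝ) ∧ aM = (1 / 2 : ℝ) ∧
      ∀ x, (E x).trace = (1 / 2 : ℂ)) := by
  obtain ⟨hpsd, hrk, hsum, -, hb⟩ := hE
  set τ : Fin (2 ^ 2) → ℝ := fun x => (E x).trace.re with hτ
  have hτc : ∀ x, ((τ x : ℂ)) = (E x).trace := by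
    intro x
    have hh : (E x).trace = star (E x).trace := by
      conv_lhs => rw [← (hpsd x).isHermitian]
      exact Matrix.trace_conjTranspose (E x)
    exact Complex.conj_eq_iff_re.mp hh.symm
  -- each trace satisfies τ - τ^2 = 3b
  have key : ∀ x, τ x - (τ x) ^ 2 = 3 * b := by
    intro x
    have hEx : (E x) = ∑ y, E x * E y := by
      rw [← Finset.mul_sum, hsum, mul_one]
    have htr := congrArg Matrix.trace hEx
    rw [Matrix.trace_sum] at htr
    rw [← Finset.add_sum_erase _ _ (Finset.mem_univ x)] at htr
    have hrest : ∑ y ∈ Finset.univ.erase x, (E x * E y).trace = 3 * (b : ℂ) := by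
      rw [Finset.sum_congr rfl (fun y hy => hb x y (Finset.ne_of_mem_erase hy).symm)]
      rw [Finset.sum_const, Finset.card_erase_of_mem (Finset.mem_univ x)]
      simp
    rw [hrest, trace_sq_of_rank_one _ (hrk x)] at htr
    have h2 : ((τ x : ℂ)) = (τ x : ℂ)^2 + 3*(b:ℂ) :=
      (hτc x).trans (htr.trans (by rw [hτc x]))
    have h3 : (((τ x - (τ x)^2 : ℝ)) : ℂ) = ((3*b : ℝ) : ℂ) := by
      push_cast; linear_combination h2
    have := Complex.ofReal_injective h3
    linarith
  -- sum of traces equals 2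
  have hsumτ : ∑ x, τ x = 2 := by
    have h1 := congrArg Matrix.trace hsum
    rw [Matrix.trace_sum, Matrix.trace_one] at h1
    have h2 : ∑ x, ((τ x : ℂ)) = 2 := by
      rw [Finset.sum_congr rfl (fun x _ => hτc x), h1]; norm_num
    have h3 : ((∑ x, τ x : ℝ) : ℂ) = ((2:ℝ):ℂ) := by
      rw [Complex.ofReal_sum]; exact_mod_cast h2
    exact_mod_cast h3
  -- quadratic: (2τ-1)^2 = 1 - 12b
  have hquad : ∀ x, (2 * τ x - 1) ^ 2 = 1 - 12 * b := by
    intro x; nlinarith [key x]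
  have hnn : (0:ℝ) ≤ 1 - 12 * b := by
    have := hquad 0; nlinarith [sq_nonneg (2 * τ 0 - 1)]
  set s := Real.sqrt (1 - 12 * b) with hs
  have hs2 : s ^ 2 = 1 - 12 * b := Real.sq_sqrt hnn
  by_cases hs0 : s = 0
  · -- b = 1/12, all traces 1/2
    right
    have hb12 : b = 1 / 12 := by
      have : (1:ℝ) - 12 * b = 0 := by rw [← hs2, hs0]; ring
      linarith
    have hτhalf : ∀ x, τ x = 1 / 2 := by
      intro x
      have h1 := hquad x
      rw [← hs2, hs0] at h1
      nlinarith
    refine ⟨hb12, by rw [hs0]; norm_num, by rw [haM, hs0]; norm_num, ?_⟩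
    intro x
    rw [← hτc x, hτhalf x]; norm_num
  · -- k = 2
    left
    have hval : ∀ x, τ x = (1 - s) / 2 ∨ τ x = (1 + s) / 2 := by
      intro x
      have h1 := hquad x
      rw [← hs2] at h1
      have h0 : (2 * τ x - 1 - s) * (2 * τ x - 1 + s) = 0 := by nlinarith
      rcases mul_eq_zero.mp h0 with h | h
      · right; linarith
      · left; linarith
    set S := Finset.univ.filter fun x => (E x).trace = (aM : ℂ) with hS
    have hmem : ∀ x, x ∈ S ↔ τ x = aM := by
      intro x
      simp only [hS, Finset.mem_filter, Finset.mem_univ, true_and]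
      rw [← hτc x]
      exact_mod_cast Iff.rfl
    set m := (Finset.univ.filter fun x => ¬ ((E x).trace = (aM : ℂ))).card with hm
    have hkm : k + m = 4 := by
      rw [hk, hm, Finset.card_filter_add_card_filter_not]
      simp
    have hsum1 : ∑ x ∈ S, τ x = k * aM := by
      rw [Finset.sum_congr rfl (fun x hx => (hmem x).mp hx), Finset.sum_const, hk]
      simp
    have hsum2 : ∑ x ∈ Finset.univ.filter (fun x => ¬ ((E x).trace = (aM : ℂ))), τ x
        = m * ((1 + s) / 2) := by
      have hall : ∀ x ∈ Finset.univ.filter (fun x => ¬ ((E x).trace = (aM : ℂ))),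
          τ x = (1 + s) / 2 := by
        intro x hx
        simp only [Finset.mem_filter, Finset.mem_univ, true_and] at hx
        rcases hval x with h | h
        · exact absurd (by rw [← hτc x, h, ← haM]) hx
        · exact h
      rw [Finset.sum_congr rfl hall, Finset.sum_const, hm]
      simp
    have hsplit : ∑ x ∈ S, τ x
        + ∑ x ∈ Finset.univ.filter (fun x => ¬ ((E x).trace = (aM : ℂ))), τ x = 2 := by
      rw [hS, Finset.sum_filter_add_sum_filter_not]
      exact hsumτ
    rw [hsum1, hsum2, haM] at hsplit
    have hkm' : (k:ℝ) + (m:ℝ) = 4 := by exact_mod_cast hkm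
    have hz : ((m:ℝ) - (k:ℝ)) * s = 0 := by nlinarith
    have hmk : (m:ℝ) = (k:ℝ) := by
      rcases mul_eq_zero.mp hz with h | h
      · linarith
      · exact absurd h hs0
    have : m = k := by exact_mod_cast hmk
    omega
end
end

section
/- Let d ≥ 3, let {E_x}_{x=1}^{d²} be a semi-SIC POVM with parameter b on ℂ^d, let a₋ = (1 − √(1 − 4b(d²−1)))/2, and let k denote the number of indices x with Tr[E_x] = a₋. Then d² − d < k ≤ d². -/
open Matrix
open scoped ComplexOrder

noncomputable section

variable {n : Type*} [Fintype n] [DecidableEq n]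

lemma trace_eq_sum_eigen {A : Matrix n n ℂ} (hA : A.IsHermitian) :
    A.trace = ∑ i, (hA.eigenvalues i : ℂ) := by
  conv_lhs => rw [hA.spectral_theorem, Unitary.conjStarAlgAut_apply]
  rw [Matrix.trace_mul_comm, ← Matrix.mul_assoc,
    (Matrix.mem_unitaryGroup_iff').mp (hA.eigenvectorUnitary).2, one_mul]
  simp [Matrix.trace_diagonal]

lemma trace_sq_eq_sum_eigen_sq {A : Matrix n n ℂ} (hA : A.IsHermitian) :
    (A * A).trace = ∑ i, ((hA.eigenvalues i : ℂ)) ^ 2 := by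
  have h := hA.spectral_theorem
  set U := (hA.eigenvectorUnitary : Matrix n n ℂ) with hU
  have hUU : star U * U = 1 := (Matrix.mem_unitaryGroup_iff').mp (hA.eigenvectorUnitary).2
  have : A * A = U * (diagonal ((↑) ∘ hA.eigenvalues) * diagonal ((↑) ∘ hA.eigenvalues)) * star U := by
    conv_lhs => rw [h, Unitary.conjStarAlgAut_apply]
    simp only [Matrix.mul_assoc]
    rw [← Matrix.mul_assoc (star U) U, hUU, one_mul]; rfl
  rw [this, Matrix.trace_mul_comm, ← Matrix.mul_assoc, hUU, one_mul, diagonal_mul_diagonal]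
  simp [Matrix.trace_diagonal, sq]


set_option maxHeartbeats 1000000 in
theorem k_bounds_of_isSemiSIC (d : ℕ) (hd : 3 ≤ d) (b : ℝ)
    (E : Fin (d ^ 2) → Matrix (Fin d) (Fin d) ℂ) (hE : IsSemiSIC d b E)
    (aM : ℝ)
    (haM : aM = (1 - Real.sqrt (1 - 4 * b * ((d : ℝ) ^ 2 - 1))) / 2)
    (k : ℕ)
    (hk : k = (Finset.univ.filter fun x => (E x).trace = (aM : ℂ)).card) :
    d ^ 2 - d < k ∧ k ≤ d ^ 2 := by
  classical
  obtain ⟨hpsd, hrank, hsum, -, hb⟩ := hE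
  have hdR : (3:ℝ) ≤ (d:ℝ) := by exact_mod_cast hd
  set t : Fin (d^2) → ℝ := fun x => ∑ i, (hpsd x).1.eigenvalues i with ht
  -- basic facts about each t x
  have key : ∀ x, (E x).trace = ((t x : ℝ) : ℂ) ∧
      ((E x) * (E x)).trace = ((t x ^ 2 : ℝ) : ℂ) ∧ 0 < t x := by
    intro x
    have hH := (hpsd x).1
    have hcard : Fintype.card {i // hH.eigenvalues i ≠ 0} = 1 :=
      (hH.rank_eq_card_non_zero_eigs).symm.trans (hrank x)
    obtain ⟨a, ha⟩ := Fintype.card_eq_one_iff.mp hcard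
    have hzero : ∀ j, j ≠ (a : Fin d) → hH.eigenvalues j = 0 := by
      intro j hj
      by_contra h
      exact hj (congrArg Subtype.val (ha ⟨j, h⟩))
    have hsum1 : ∑ i, hH.eigenvalues i = hH.eigenvalues a :=
      Finset.sum_eq_single_of_mem _ (Finset.mem_univ _) (fun j _ hj => hzero j hj)
    have htx : t x = hH.eigenvalues a := hsum1
    refine ⟨?_, ?_, ?_⟩
    · rw [trace_eq_sum_eigen hH]
      simp only [ht]
      push_cast
      rfl
    · rw [trace_sq_eq_sum_eigen_sq hH]
      have : ∑ i, (hH.eigenvalues i : ℂ) ^ 2 = ((hH.eigenvalues a : ℂ)) ^ 2 :=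
        Finset.sum_eq_single_of_mem _ (Finset.mem_univ _)
          (fun j _ hj => by rw [hzero j hj]; simp)
      rw [this, htx]
      push_cast
      ring
    · rw [htx]
      exact lt_of_le_of_ne ((hpsd x).eigenvalues_nonneg a) (Ne.symm a.2)
  -- cardinality facts
  have hcardN : (Fintype.card (Fin (d^2)) : ℝ) = (d:ℝ)^2 := by push_cast [Fintype.card_fin]; ring
  have hd2pos : 0 < d ^ 2 := by positivity
  -- the quadratic equation
  have hquad : ∀ x, t x ^ 2 - t x + ((d:ℝ)^2 - 1) * b = 0 := by
    intro x
    have h1 : (E x * (∑ y, E y)).trace = (E x).trace := by rw [hsum, mul_one]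
    rw [Finset.mul_sum, Matrix.trace_sum] at h1
    have h2 : ∑ y, (E x * E y).trace
        = ((t x ^ 2 : ℝ) : ℂ) + ((d:ℝ)^2 - 1) * (b : ℂ) := by
      rw [← Finset.add_sum_erase _ _ (Finset.mem_univ x), (key x).2.1]
      congr 1
      rw [Finset.sum_congr rfl (fun y hy => hb x y (Ne.symm (Finset.ne_of_mem_erase hy)))]
      rw [Finset.sum_const, Finset.card_erase_of_mem (Finset.mem_univ x), Finset.card_univ,
        Fintype.card_fin]
      have h9 : (1:ℕ) ≤ d ^ 2 := hd2pos
      rw [nsmul_eq_mul, Nat.cast_sub h9]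
      push_cast
      ring
    rw [h2, (key x).1] at h1
    have h4 : t x ^ 2 + ((d:ℝ)^2 - 1) * b = t x := by exact_mod_cast h1
    linarith
  -- total trace is d
  have hcsum : ∑ x, t x = (d : ℝ) := by
    have h1 : ∑ x, (E x).trace = (d : ℂ) := by
      rw [← Matrix.trace_sum, hsum, Matrix.trace_one, Fintype.card_fin]
    rw [Finset.sum_congr rfl (fun x _ => (key x).1)] at h1
    exact_mod_cast h1
  -- b is nonnegative
  have hbnn : 0 ≤ b := by
    have h9 : 9 ≤ d ^ 2 := by nlinarith
    set x0 : Fin (d^2) := ⟨0, by omega⟩ with hx0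
    set x1 : Fin (d^2) := ⟨1, by omega⟩ with hx1
    have h01 : x0 ≠ x1 := by
      intro h
      rw [hx0, hx1, Fin.mk.injEq] at h
      exact zero_ne_one h
    obtain ⟨B, hB⟩ : ∃ B : Matrix (Fin d) (Fin d) ℂ, E x0 = Bᴴ * B := by
      open scoped MatrixOrder in
      obtain ⟨X, hX, -, hXX⟩ := CFC.exists_sqrt_of_isSelfAdjoint_of_quasispectrumRestricts
        (hpsd x0).isHermitian (QuasispectrumRestricts.nnreal_of_nonneg (hpsd x0).nonneg)
      exact ⟨X, by rw [← hXX]; exact congrArg (fun Y => Y * X) hX.star_eq.symm⟩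
    have hps : (B * E x1 * Bᴴ).PosSemidef := (hpsd x1).mul_mul_conjTranspose_same B
    have htr : (E x0 * E x1).trace = (B * E x1 * Bᴴ).trace := by
      rw [hB, Matrix.mul_assoc, Matrix.trace_mul_comm, Matrix.mul_assoc]
    have h2 : (b : ℂ) = ∑ i, ((hps.1.eigenvalues i : ℝ) : ℂ) := by
      rw [← hb x0 x1 h01, htr, trace_eq_sum_eigen hps.1]
    have h3 : b = ∑ i, hps.1.eigenvalues i := by exact_mod_cast h2
    rw [h3]
    exact Finset.sum_nonneg fun i _ => hps.eigenvalues_nonneg i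
  -- b is positive
  have hbpos : 0 < b := by
    rcases hbnn.lt_or_eq with h | h
    · exact h
    have hall : ∀ x, t x = 1 := by
      intro x
      have hq := hquad x
      rw [← h] at hq
      have : t x * (t x - 1) = 0 := by nlinarith
      rcases mul_eq_zero.mp this with h1 | h1
      · exact absurd h1 (ne_of_gt (key x).2.2)
      · linarith
    have : ∑ x, t x = ((d^2 : ℕ) : ℝ) := by
      rw [Finset.sum_congr rfl (fun x _ => hall x), Finset.sum_const, Finset.card_univ,
        Fintype.card_fin, nsmul_eq_mul, mul_one]
    rw [hcsum] at this
    push_cast at this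
    nlinarith
  -- discriminant
  set c : ℝ := (d:ℝ)^2 - 1 with hc
  have hcpos : 0 < c := by rw [hc]; nlinarith
  set s : ℝ := Real.sqrt (1 - 4 * b * c) with hs
  have hDnn : 0 ≤ 1 - 4 * b * c := by
    have hq := hquad ⟨0, hd2pos⟩
    nlinarith [sq_nonneg (2 * t ⟨0, hd2pos⟩ - 1)]
    
  have hssq : s ^ 2 = 1 - 4 * b * c := Real.sq_sqrt hDnn
  have hsnn : 0 ≤ s := Real.sqrt_nonneg _
  have hslt1 : s < 1 := by nlinarith
  have haM' : aM = (1 - s) / 2 := by rw [haM, hs, hc]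
  -- each t x is aM or aP
  set aP : ℝ := (1 + s) / 2 with haP
  have hvals : ∀ x, t x = aM ∨ t x = aP := by
    intro x
    have hq := hquad x
    have : (2 * t x - 1 - s) * (2 * t x - 1 + s) = 0 := by nlinarith
    rcases mul_eq_zero.mp this with h1 | h1
    · right; rw [haP]; linarith
    · left; rw [haM']; linarith
  -- s is positive
  have hspos : 0 < s := by
    rcases hsnn.lt_or_eq with h | h
    · exact h
    have hall : ∀ x, t x = 1/2 := by
      intro x
      rcases hvals x with h1 | h1
      · rw [h1, haM', ← h]; norm_num
      · rw [h1, haP, ← h]; norm_num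
    have : ∑ x, t x = ((d^2 : ℕ) : ℝ) * (1/2) := by
      rw [Finset.sum_congr rfl (fun x _ => hall x), Finset.sum_const, Finset.card_univ,
        Fintype.card_fin, nsmul_eq_mul]
    rw [hcsum] at this
    push_cast at this
    nlinarith
  -- counting
  set S : Finset (Fin (d^2)) := Finset.univ.filter (fun x => (E x).trace = (aM : ℂ)) with hS
  have hmemS : ∀ x, x ∈ S ↔ t x = aM := by
    intro x
    rw [hS, Finset.mem_filter, (key x).1]
    constructor
    · rintro ⟨-, h⟩; exact_mod_cast h
    · intro h; exact ⟨Finset.mem_univ _, by exact_mod_cast h⟩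
  have hkle : k ≤ d ^ 2 := by
    rw [hk]
    calc (Finset.univ.filter fun x => (E x).trace = (aM : ℂ)).card
        ≤ Finset.univ.card := Finset.card_filter_le _ _
      _ = d ^ 2 := by rw [Finset.card_univ, Fintype.card_fin]
  -- split the sum
  have hsplit : (d:ℝ) = (k : ℝ) * aM + ((d:ℝ)^2 - k) * aP := by
    have h1 : ∑ x ∈ S, t x + ∑ x ∈ Sᶜ, t x = (d:ℝ) := by
      rw [Finset.sum_add_sum_compl, hcsum]
    have h2 : ∑ x ∈ S, t x = (S.card : ℝ) * aM := by
      rw [Finset.sum_congr rfl (fun x hx => (hmemS x).mp hx), Finset.sum_const, nsmul_eq_mul]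
    have h3 : ∑ x ∈ Sᶜ, t x = ((Sᶜ).card : ℝ) * aP := by
      rw [Finset.sum_congr rfl (fun x hx => ?_), Finset.sum_const, nsmul_eq_mul]
      have hx' : ¬ t x = aM := fun h => (Finset.mem_compl.mp hx) ((hmemS x).mpr h)
      rcases hvals x with h | h
      · exact absurd h hx'
      · exact h
    have h4 : ((Sᶜ).card : ℝ) = (d:ℝ)^2 - k := by
      rw [Finset.card_compl, Fintype.card_fin, ← hk, Nat.cast_sub hkle]
      push_cast; ring
    rw [h2, h3, h4, ← hk] at h1
    linarith
  -- final inequality over ℝ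
  have hfin : (d:ℝ)^2 - (d:ℝ) < (k:ℝ) := by
    rw [haM', haP] at hsplit
    have heq : s * ((d:ℝ)^2 - 2*(k:ℝ)) = 2*(d:ℝ) - (d:ℝ)^2 := by
      linear_combination (-2 : ℝ) * hsplit
    have h2d : 2*(d:ℝ) - (d:ℝ)^2 < 0 := by nlinarith
    have hm : (d:ℝ)^2 - 2*(k:ℝ) < 0 := by nlinarith
    nlinarith [mul_neg_of_neg_of_pos hm (sub_pos.mpr hslt1)]
  constructor
  · have hdd2 : d ≤ d ^ 2 := by nlinarith
    have : ((d^2 - d : ℕ) : ℝ) < (k : ℝ) := by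
      rw [Nat.cast_sub hdd2]; push_cast; push_cast at hfin; linarith
    exact_mod_cast this
  · exact hkle
end
end
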